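/- Let n ≥ 1. The set of maps X : ℝⁿ → ℝⁿ of the form X(x) = B x + ⟨A, x⟩ x + C, where B ranges over linear maps ℝⁿ → ℝⁿ and A, C range over vectors in ℝⁿ, is a real vector space of dimension exactly n(n+2) = n² + 2n; equivalently, the linear map (B, A, C) ↦ (x ↦ B x + ⟨A, x⟩ x + C) is injective. -/
import Mathlib


open scoped RealInnerProductSpace

section Aux

variable (n : ℕ)

local notation "E" => EuclideanSpace ℝ (Fin n)

/-- The linear parametrization `(B, A, C) ↦ (x ↦ B x + ⟪A,x⟫ • x + C)`. -/
noncomputable def projParam : ((E →ₗ[ℝ] E) × E × E) →ₗ[ℝ] (E → E) where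
  toFun p := fun x => p.1 x + ⟪p.2.1, x⟫ • x + p.2.2
  map_add' p q := by
    funext x
    simp only [Prod.fst_add, Prod.snd_add, LinearMap.add_apply, inner_add_left, add_smul,
      Pi.add_apply]
    abel
  map_smul' c p := by
    funext x
    simp only [Prod.smul_fst, Prod.smul_snd, LinearMap.smul_apply, inner_smul_left,
      RingHom.id_apply, Pi.smul_apply, smul_add, smul_smul, conj_trivial]

lemma projParam_zero (B : E →ₗ[ℝ] E) (A C : E)
    (h : ∀ x : E, B x + ⟪A, x⟫ • x + C = 0) : B = 0 ∧ A = 0 ∧ C = 0 := by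
  have hC : C = 0 := by
    have := h 0
    simpa using this
  subst hC
  have h1 : ∀ x : E, B x + ⟪A, x⟫ • x = 0 := by
    intro x; have := h x; simpa using this
  have hAx : ∀ x : E, ⟪A, x⟫ • x = 0 := by
    intro x
    have h2 := h1 ((2 : ℝ) • x)
    rw [map_smul, inner_smul_right] at h2
    have h3 := h1 x
    have : (2 : ℝ) • (B x + ⟪A, x⟫ • x) = 0 := by rw [h3, smul_zero]
    rw [smul_add] at this
    have key : (2 : ℝ) • B x + (2 * ⟪A, x⟫) • ((2:ℝ) • x) = 0 := h2
    have : (2 * ⟪A, x⟫) • ((2:ℝ) • x) - (2:ℝ) • (⟪A, x⟫ • x) = 0 := by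
      have := sub_eq_zero.mpr (key.trans this.symm)
      linear_combination (norm := module) this
    have h4 : ((2 : ℝ) * ⟪A, x⟫) • x = 0 := by
      linear_combination (norm := module) this
    rcases smul_eq_zero.mp h4 with h | h
    · have hx0 : ⟪A, x⟫ = 0 := by linarith
      rw [hx0, zero_smul]
    · rw [h, smul_zero]
  have hA : A = 0 := by
    by_contra hA0
    have := hAx A
    rw [real_inner_self_eq_norm_sq, smul_eq_zero] at this
    rcases this with h | h
    · exact hA0 (by simpa using (pow_eq_zero_iff (by norm_num)).mp h)
    · exact hA0 h
  subst hA
  refine ⟨LinearMap.ext fun x => ?_, rfl, rfl⟩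
  simpa using h1 x

lemma projParam_injective : Function.Injective (projParam n) := by
  intro p q hpq
  have h : ∀ x : E, (p.1 - q.1) x + ⟪p.2.1 - q.2.1, x⟫ • x + (p.2.2 - q.2.2) = 0 := by
    intro x
    have := congrFun hpq x
    simp only [projParam, LinearMap.coe_mk, AddHom.coe_mk] at this
    simp only [LinearMap.sub_apply, inner_sub_left, sub_smul]
    linear_combination (norm := module) this
  obtain ⟨hB, hA, hC⟩ := projParam_zero n _ _ _ h
  have h1 : p.1 = q.1 := sub_eq_zero.mp hB
  have h2 : p.2.1 = q.2.1 := sub_eq_zero.mp hA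
  have h3 : p.2.2 = q.2.2 := sub_eq_zero.mp hC
  exact Prod.ext h1 (Prod.ext h2 h3)

end Aux

/-- The set of maps `X : ℝⁿ → ℝⁿ` of the form
`X x = B x + ⟨A, x⟩ x + C` is a real vector space of dimension exactly `n(n+2)`;
equivalently, the linear parametrization `(B, A, C) ↦ X` is injective. -/
theorem projective_collineations_dimension (n : ℕ) (hn : 1 ≤ n) :
    (∃ S : Submodule ℝ (EuclideanSpace ℝ (Fin n) → EuclideanSpace ℝ (Fin n)),
      (↑S = {X : EuclideanSpace ℝ (Fin n) → EuclideanSpace ℝ (Fin n) |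
          ∃ (B : EuclideanSpace ℝ (Fin n) →ₗ[ℝ] EuclideanSpace ℝ (Fin n))
            (A C : EuclideanSpace ℝ (Fin n)),
            ∀ x : EuclideanSpace ℝ (Fin n), X x = B x + ⟪A, x⟫ • x + C}) ∧
      Module.finrank ℝ S = n * (n + 2)) ∧
    Function.Injective
      (fun p : (EuclideanSpace ℝ (Fin n) →ₗ[ℝ] EuclideanSpace ℝ (Fin n)) ×
          EuclideanSpace ℝ (Fin n) × EuclideanSpace ℝ (Fin n) =>
        fun x : EuclideanSpace ℝ (Fin n) => p.1 x + ⟪p.2.1, x⟫ • x + p.2.2) := by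
  have hinj := projParam_injective n
  constructor
  · refine ⟨LinearMap.range (projParam n), ?_, ?_⟩
    · ext X
      simp only [SetLike.mem_coe, LinearMap.mem_range, Set.mem_setOf_eq]
      constructor
      · rintro ⟨p, rfl⟩
        exact ⟨p.1, p.2.1, p.2.2, fun x => rfl⟩
      · rintro ⟨B, A, C, hX⟩
        exact ⟨(B, A, C), (funext fun x => (hX x).symm)⟩
    · rw [LinearMap.finrank_range_of_inj hinj]
      simp [Module.finrank_prod, Module.finrank_linearMap]
      ring
  · exact hinj
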